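/- Let (X_{ij})_{i,j∈ℤ} be a stationary random field that is regularly varying with index α∈(0,2). Then for every δ>0, lim_{ε→0⁺} limsup_{n→∞} ℙ(‖Â_n^{<ε}‖ > δ) = 0. -/

import Mathlib

open MeasureTheory ProbabilityTheory Filter Matrix

noncomputable section

/-- A real-valued random field indexed by `ℤ × ℤ` is stationary if its finite-dimensional
distributions are invariant under all shifts of `ℤ²`. -/
def IsStationaryField {Ω : Type*} [MeasurableSpace Ω] (μ : Measure Ω)
    (X : ℤ × ℤ → Ω → ℝ) : Prop :=
  ∀ a b : ℤ,
    Measure.map (fun ω => fun p : ℤ × ℤ => X (p.1 + a, p.2 + b) ω) μ =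
      Measure.map (fun ω => fun p : ℤ × ℤ => X p ω) μ

/-- A random field `X` is `m`-dependent if any two subfamilies whose index sets are separated
by a (sup-)distance greater than `m` are independent. -/
def IsMDependent {Ω : Type*} [MeasurableSpace Ω] (μ : Measure Ω)
    (X : ℤ × ℤ → Ω → ℝ) (m : ℕ) : Prop :=
  ∀ A B : Set (ℤ × ℤ),
    (∀ p ∈ A, ∀ q ∈ B, (m : ℤ) < max |p.1 - q.1| |p.2 - q.2|) →
    IndepFun (fun ω => fun p : A => X p.1 ω) (fun ω => fun q : B => X q.1 ω) μ

/-- A positive function is slowly varying if `L (c x) / L x → 1` as `x → ∞` for every `c > 0`. -/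
def SlowlyVarying (L : ℝ → ℝ) : Prop :=
  (∀ x : ℝ, 0 < x → 0 < L x) ∧
    ∀ c : ℝ, 0 < c → Tendsto (fun x => L (c * x) / L x) atTop (nhds 1)

/-- The field is regularly varying with index `α`: `ℙ(|X₀₀| > x) = x^(-α) L(x)`
for a slowly varying `L`. -/
def IsRegVarying {Ω : Type*} [MeasurableSpace Ω] (μ : Measure Ω)
    (X : ℤ × ℤ → Ω → ℝ) (α : ℝ) : Prop :=
  ∃ L : ℝ → ℝ, SlowlyVarying L ∧
    ∀ x : ℝ, 0 < x → (μ {ω | x < |X (0, 0) ω|}).toReal = x ^ (-α) * L x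

/-- The symmetrized field `X̂`. -/
def symX {Ω : Type*} (X : ℤ × ℤ → Ω → ℝ) (i j : ℤ) (ω : Ω) : ℝ :=
  if i ≤ j then X (i, j) ω else X (j, i) ω

/-- `(a_n)` is a normalizing sequence: `a_n → ∞` and `n ℙ(|X₀₀| > a_n) → 1`. -/
def IsNormSeq {Ω : Type*} [MeasurableSpace Ω] (μ : Measure Ω)
    (X : ℤ × ℤ → Ω → ℝ) (a : ℕ → ℝ) : Prop :=
  Tendsto a atTop atTop ∧
    Tendsto (fun n : ℕ => (n : ℝ) * (μ {ω | a n < |X (0, 0) ω|}).toReal) atTop (nhds 1)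

/-- The Wigner matrix `Â_n = (X̂_{ij} / b)_{1 ≤ i,j ≤ n}`. -/
def wignerMat {Ω : Type*} (X : ℤ × ℤ → Ω → ℝ) (b : ℝ) (n : ℕ) (ω : Ω) :
    Matrix (Fin n) (Fin n) ℝ :=
  Matrix.of fun i j => symX X ((i : ℕ) + 1 : ℤ) ((j : ℕ) + 1 : ℤ) ω / b

/-- The `p × n` data matrix `A = (X_{ij} / c)_{1 ≤ i ≤ p, 1 ≤ j ≤ n}`. -/
def dataMat {Ω : Type*} (X : ℤ × ℤ → Ω → ℝ) (c : ℝ) (p n : ℕ) (ω : Ω) :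
    Matrix (Fin p) (Fin n) ℝ :=
  Matrix.of fun i j => X (((i : ℕ) + 1 : ℤ), ((j : ℕ) + 1 : ℤ)) ω / c

/-- Entrywise truncation keeping the entries of absolute value `> t` : `M^{>t}`. -/
def truncGt {p q : ℕ} (M : Matrix (Fin p) (Fin q) ℝ) (t : ℝ) : Matrix (Fin p) (Fin q) ℝ :=
  Matrix.of fun i j => if t < |M i j| then M i j else 0

/-- `M^{<t} := M - M^{>t}`, i.e. the entries of absolute value `≤ t`. -/
def truncLe {p q : ℕ} (M : Matrix (Fin p) (Fin q) ℝ) (t : ℝ) : Matrix (Fin p) (Fin q) ℝ :=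
  M - truncGt M t

/-- The spectral norm (largest singular value) of a rectangular real matrix, realized as the
operator norm of the induced map between Euclidean spaces. -/
def specNorm {p q : ℕ} (M : Matrix (Fin p) (Fin q) ℝ) : ℝ :=
  ‖LinearMap.toContinuousLinearMap (Matrix.toEuclideanLin M)‖

/-- The event that the `(k,l)` block (of size `r × r`, `1`-based block indices) of the
matrix `(X̂_{ij}/b)` has max-norm `> ε`. -/
def blockExceed {Ω : Type*} (X : ℤ × ℤ → Ω → ℝ) (b : ℝ) (r k l : ℕ) (ε : ℝ) (ω : Ω) : Prop :=
  ∃ i ∈ Finset.Ioc ((k - 1) * r) (k * r), ∃ j ∈ Finset.Ioc ((l - 1) * r) (l * r),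
    ε < |symX X (i : ℤ) (j : ℤ) ω / b|

/-- `r_n = n^(1-η)` (as a natural number, via the floor). -/
def rseq (η : ℝ) (n : ℕ) : ℕ := ⌊(n : ℝ) ^ (1 - η)⌋₊

/-- `k_n = n^η` (as a natural number, via the floor). -/
def kseq (η : ℝ) (n : ℕ) : ℕ := ⌊(n : ℝ) ^ η⌋₊

/-- The set of `n` for which `n^(1-η)` and `n^η` are integers. -/
def goodSet (η : ℝ) : Set ℕ :=
  {n | ((rseq η n : ℝ) = (n : ℝ) ^ (1 - η)) ∧ ((kseq η n : ℝ) = (n : ℝ) ^ η)}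

/-- `lam` is an eigenvalue of the real matrix `M`. -/
def IsEigenvalue {n : Type*} [Fintype n] (M : Matrix n n ℝ) (lam : ℝ) : Prop :=
  ∃ v : n → ℝ, v ≠ 0 ∧ M.mulVec v = lam • v

/-- The multiset of singular values of a rectangular real matrix: the square roots of the
eigenvalues of `Mᵀ M` (`= Mᴴ M` over `ℝ`), with multiplicity. -/
def singularValues {p q : ℕ} (M : Matrix (Fin p) (Fin q) ℝ) : Multiset ℝ :=
  Finset.univ.val.map fun i =>
    Real.sqrt ((show (Mᵀ * M).IsHermitian by
      simpa [Matrix.conjTranspose_eq_transpose_of_trivial] using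
        Matrix.isHermitian_conjTranspose_mul_self M).eigenvalues i)

/-- The eigenvalues of a real symmetric matrix, sorted increasingly (as a list);
junk value for non-symmetric matrices. -/
def sortedEigs {N : ℕ} (M : Matrix (Fin N) (Fin N) ℝ) : List ℝ :=
  if h : M.IsHermitian then (Finset.univ.val.map h.eigenvalues).sort (· ≤ ·)
  else List.replicate N 0

/-- The index of row `i` of block-row `a` inside a `(k*r) × (k*r)` matrix partitioned
into `r × r` blocks. -/
def blkIdx {k r : ℕ} (a : Fin k) (i : Fin r) : Fin (k * r) :=
  ⟨a.1 * r + i.1, by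
    have hi := i.2
    have ha := a.2
    have h1 : a.1 * r + i.1 < (a.1 + 1) * r := by nlinarith
    have h2 : (a.1 + 1) * r ≤ k * r := by nlinarith
    exact lt_of_lt_of_le h1 h2⟩

/-- The `(a,b)` block (of size `r × r`) of a `(k*r) × (k*r)` matrix. -/
def blockOf {k r : ℕ} (H : Matrix (Fin (k * r)) (Fin (k * r)) ℝ) (a b : Fin k) :
    Matrix (Fin r) (Fin r) ℝ :=
  Matrix.of fun i j => H (blkIdx a i) (blkIdx b j)

/-- The `n × n` matrix with entries `X̂_{ij} 1{|X̂_{ij}| < t}` (not yet normalized). -/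
def truncSymMat {Ω : Type*} (X : ℤ × ℤ → Ω → ℝ) (n : ℕ) (t : ℝ) (ω : Ω) :
    Matrix (Fin n) (Fin n) ℝ :=
  Matrix.of fun i j =>
    if |symX X ((i : ℕ) + 1 : ℤ) ((j : ℕ) + 1 : ℤ) ω| < t
    then symX X ((i : ℕ) + 1 : ℤ) ((j : ℕ) + 1 : ℤ) ω else 0

/-! ### Auxiliary lemmas for `stmt13` -/

lemma specNorm_le_sqrt' {p q : ℕ} (M : Matrix (Fin p) (Fin q) ℝ) :
    specNorm M ≤ Real.sqrt (∑ i, ∑ j, (M i j)^2) := by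
  refine ContinuousLinearMap.opNorm_le_bound _ (Real.sqrt_nonneg _) fun v => ?_
  have hv : ‖v‖ = Real.sqrt (∑ j, (v j)^2) := by
    rw [EuclideanSpace.norm_eq]
    exact congrArg Real.sqrt (Finset.sum_congr rfl fun j _ => by rw [Real.norm_eq_abs, sq_abs])
  have happ : (LinearMap.toContinuousLinearMap (Matrix.toEuclideanLin M)) v
      = Matrix.toEuclideanLin M v := rfl
  rw [happ]
  have h1 : ‖Matrix.toEuclideanLin M v‖ = Real.sqrt (∑ i, (∑ j, M i j * v j)^2) := by
    rw [EuclideanSpace.norm_eq]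
    refine congrArg Real.sqrt (Finset.sum_congr rfl fun i _ => ?_)
    have h2 : (Matrix.toEuclideanLin M v) i = ∑ j, M i j * v j := by
      simp [Matrix.toEuclideanLin_apply, Matrix.mulVec, dotProduct]
    rw [h2, Real.norm_eq_abs, sq_abs]
  rw [h1, hv, ← Real.sqrt_mul (by positivity)]
  apply Real.sqrt_le_sqrt
  calc ∑ i, (∑ j, M i j * v j)^2
      ≤ ∑ i : Fin p, (∑ j, (M i j)^2) * (∑ j, (v j)^2) :=
        Finset.sum_le_sum fun i _ => Finset.sum_mul_sq_le_sq_mul_sq _ _ _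
    _ = (∑ i, ∑ j, (M i j)^2) * (∑ j, (v j)^2) := by rw [Finset.sum_mul]

lemma pow_calc' {ε β : ℝ} (hε : 0 < ε) (k : ℕ) :
    (ε / 2^k)^2 * (2^β * (((2:ℝ)^(k+1))/ε)^β * 2) =
      2^(2*β+1) * ε^(2-β) * ((2:ℝ)^(β-2))^k := by
  have h2 : (0:ℝ) < 2 := two_pos
  have e1 : ((2:ℝ)^k : ℝ) = (2:ℝ)^(k:ℝ) := (Real.rpow_natCast 2 k).symm
  have e2 : ((2:ℝ)^(k+1) : ℝ) = (2:ℝ)^((k:ℝ)+1) := by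
    rw [← Real.rpow_natCast 2 (k+1)]; push_cast; ring_nf
  have e3 : (ε/2^k)^2 = ε^(2:ℝ) * (2:ℝ)^(-(2*(k:ℝ))) := by
    rw [div_pow, e1, ← Real.rpow_natCast ε 2, ← Real.rpow_natCast ((2:ℝ)^(k:ℝ)) 2,
      ← Real.rpow_mul h2.le, div_eq_mul_inv, ← Real.rpow_neg h2.le]
    push_cast; ring_nf
  have e4 : (((2:ℝ)^(k+1))/ε)^β = (2:ℝ)^(((k:ℝ)+1)*β) * ε^(-β) := by
    rw [e2, Real.div_rpow (by positivity) hε.le, ← Real.rpow_mul h2.le,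
      div_eq_mul_inv, ← Real.rpow_neg hε.le]
  have e5 : ((2:ℝ)^(β-2))^k = (2:ℝ)^((β-2)*(k:ℝ)) := by
    rw [← Real.rpow_natCast ((2:ℝ)^(β-2)) k, ← Real.rpow_mul h2.le]
  rw [e3, e4, e5]
  calc ε^(2:ℝ) * (2:ℝ)^(-(2*(k:ℝ))) * (2^β * ((2:ℝ)^(((k:ℝ)+1)*β) * ε^(-β)) * 2)
      = (2:ℝ)^(-(2*(k:ℝ))) * 2^β * 2^(((k:ℝ)+1)*β) * 2^(1:ℝ) * (ε^(2:ℝ) * ε^(-β)) := by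
        rw [Real.rpow_one]; ring
    _ = (2:ℝ)^(-(2*(k:ℝ)) + β + ((k:ℝ)+1)*β + 1) * ε^((2:ℝ) + -β) := by
        rw [← Real.rpow_add h2, ← Real.rpow_add h2, ← Real.rpow_add h2, ← Real.rpow_add hε]
    _ = (2:ℝ)^(2*β+1 + (β-2)*(k:ℝ)) * ε^(2-β) := by
        rw [show -(2*(k:ℝ)) + β + ((k:ℝ)+1)*β + 1 = 2*β+1 + (β-2)*(k:ℝ) from by ring,
          show (2:ℝ) + -β = 2-β from by ring]
    _ = 2^(2*β+1) * ε^(2-β) * (2:ℝ)^((β-2)*(k:ℝ)) := by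
        rw [Real.rpow_add h2]; ring

lemma measurable_symX' {Ω : Type*} [MeasurableSpace Ω] (X : ℤ × ℤ → Ω → ℝ)
    (hmeas : ∀ p, Measurable (X p)) (i j : ℤ) : Measurable (symX X i j) := by
  unfold symX; split_ifs <;> exact hmeas _

set_option maxHeartbeats 1000000 in
/-- eq. (4.3) of the paper: for a stationary regularly varying field with
index `α ∈ (0,2)`, `lim_{ε→0⁺} limsup_n ℙ(‖Â_n^{<ε}‖ > δ) = 0` for every `δ > 0`. -/
theorem stmt13 {Ω : Type*} [MeasurableSpace Ω] (μ : Measure Ω) [IsProbabilityMeasure μ]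
    (X : ℤ × ℤ → Ω → ℝ) (hmeas : ∀ p, Measurable (X p))
    (hstat : IsStationaryField μ X)
    (α : ℝ) (hα0 : 0 < α) (hα2 : α < 2) (hreg : IsRegVarying μ X α)
    (a : ℕ → ℝ) (ha : IsNormSeq μ X a) :
    ∀ δ : ℝ, 0 < δ →
      Tendsto
        (fun ε : ℝ =>
          Filter.limsup
            (fun n : ℕ => μ {ω | δ < specNorm (truncLe (wignerMat X (a (n ^ 2)) n ω) ε)})
            atTop)
        (nhdsWithin 0 (Set.Ioi 0)) (nhds 0) := by
  intro δ hδ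
  obtain ⟨L, ⟨hLpos, hLslow⟩, hTeq⟩ := hreg
  set T : ℝ → ℝ := fun x => (μ {ω | x < |X (0, 0) ω|}).toReal with hTdef
  set b : ℕ → ℝ := fun n => a (n ^ 2) with hbdef
  -- basic facts about the tail function T
  have hTnonneg : ∀ x, 0 ≤ T x := fun x => ENNReal.toReal_nonneg
  have hTanti : ∀ x y : ℝ, x ≤ y → T y ≤ T x := by
    intro x y hxy
    exact ENNReal.toReal_mono (measure_ne_top μ _)
      (measure_mono fun ω hω => lt_of_le_of_lt hxy hω)
  have hTpos : ∀ x : ℝ, 0 < x → 0 < T x := by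
    intro x hx
    have hTeq' : T x = x ^ (-α) * L x := hTeq x hx
    rw [hTeq']
    exact mul_pos (Real.rpow_pos_of_pos hx _) (hLpos x hx)
  -- b tends to infinity, and n² T(b n) → 1
  have hsq : Tendsto (fun n : ℕ => n ^ 2) atTop atTop :=
    tendsto_atTop_mono (fun n => Nat.le_self_pow two_ne_zero n) tendsto_id
  have hb : Tendsto b atTop atTop := ha.1.comp hsq
  have hn2T : Tendsto (fun n : ℕ => (n:ℝ)^2 * T (b n)) atTop (nhds 1) := by
    have h : Tendsto (fun n : ℕ => ((n^2 : ℕ):ℝ) * T (b n)) atTop (nhds 1) := ha.2.comp hsq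
    simpa [Nat.cast_pow] using h
  -- the exponent β
  set β : ℝ := (α + 2)/2 with hβdef
  have hαβ : α < β := by rw [hβdef]; linarith
  have hβ2 : β < 2 := by rw [hβdef]; linarith
  have hβ0 : 0 < β := by rw [hβdef]; linarith
  have h2 : (0:ℝ) < 2 := two_pos
  -- doubling bound eventually
  have hev : ∀ᶠ x : ℝ in atTop, T x ≤ 2^β * T (2*x) := by
    have hcrit : (2:ℝ)^(α - β) < 1 :=
      Real.rpow_lt_one_of_one_lt_of_neg one_lt_two (by linarith)
    have h1 : ∀ᶠ x : ℝ in atTop, (2:ℝ)^(α-β) < L (2*x)/L x :=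
      (hLslow 2 h2).eventually (eventually_gt_nhds hcrit)
    filter_upwards [h1, eventually_gt_atTop (0:ℝ)] with x hx hx0
    have h2x : (0:ℝ) < 2*x := by linarith
    have hTx : T x = x ^ (-α) * L x := hTeq x hx0
    have hT2x : T (2*x) = (2*x) ^ (-α) * L (2*x) := hTeq _ h2x
    rw [hTx, hT2x]
    have hLx := hLpos x hx0
    have key : L x ≤ 2^(β-α) * L (2*x) := by
      have h3 : (2:ℝ)^(α-β) * L x < L (2*x) := (lt_div_iff₀ hLx).mp hx
      have h4 : (2:ℝ)^(β-α) * ((2:ℝ)^(α-β) * L x) = L x := by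
        rw [← mul_assoc, ← Real.rpow_add h2]
        norm_num
      nlinarith [Real.rpow_pos_of_pos h2 (β-α)]
    have hrw : (2*x)^(-α) = 2^(-α) * x^(-α) := Real.mul_rpow (by norm_num) hx0.le
    rw [hrw]
    have h4 : (2:ℝ)^β * 2^(-α) = 2^(β-α) := by
      rw [← Real.rpow_add h2]; ring_nf
    calc x^(-α) * L x ≤ x^(-α) * (2^(β-α) * L (2*x)) :=
          mul_le_mul_of_nonneg_left key (Real.rpow_nonneg hx0.le _)
      _ = 2^β * (2^(-α) * x^(-α) * L (2*x)) := by rw [← h4]; ring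
  obtain ⟨c₁, hc₁⟩ := eventually_atTop.mp hev
  set x₀ : ℝ := max c₁ 1 with hx₀def
  have hx₀1 : (1:ℝ) ≤ x₀ := le_max_right _ _
  have hx₀pos : (0:ℝ) < x₀ := lt_of_lt_of_le one_pos hx₀1
  have hx₀ : ∀ x, x₀ ≤ x → T x ≤ 2^β * T (2*x) :=
    fun x hx => hc₁ x (le_trans (le_max_left _ _) hx)
  -- iterated doubling
  have hiter : ∀ j : ℕ, ∀ y : ℝ, x₀ ≤ y → T y ≤ (2^β)^j * T (2^j * y) := by
    intro j
    induction j with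
    | zero => intro y hy; simp
    | succ m ih =>
      intro y hy
      have hy0 : 0 < y := lt_of_lt_of_le hx₀pos hy
      have hpm : (1:ℝ) ≤ 2^m := one_le_pow₀ one_le_two
      have h1 := ih y hy
      have h2' : T (2^m * y) ≤ 2^β * T (2 * (2^m * y)) :=
        hx₀ _ (le_trans hy (le_mul_of_one_le_left hy0.le hpm))
      have h3 : 2 * (2^m * y) = 2^(m+1) * y := by ring
      rw [h3] at h2'
      calc T y ≤ (2^β)^m * T (2^m*y) := h1
        _ ≤ (2^β)^m * (2^β * T (2^(m+1) * y)) :=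
            mul_le_mul_of_nonneg_left h2' (by positivity)
        _ = (2^β)^(m+1) * T (2^(m+1) * y) := by rw [pow_succ]; ring
  -- Potter-type bound
  have hPotter : ∀ y x : ℝ, x₀ ≤ y → y ≤ x → T y ≤ 2^β * (x/y)^β * T x := by
    intro y x hy hyx
    have hy0 : 0 < y := lt_of_lt_of_le hx₀pos hy
    have hx0 : 0 < x := lt_of_lt_of_le hy0 hyx
    have hP : ∃ j : ℕ, x ≤ 2^j * y := by
      obtain ⟨j, hj⟩ := pow_unbounded_of_one_lt (x/y) one_lt_two
      exact ⟨j, by rw [div_lt_iff₀ hy0] at hj; linarith⟩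
    set j := Nat.find hP with hjdef
    have hj : x ≤ 2^j * y := Nat.find_spec hP
    have hjb : (2:ℝ)^j ≤ 2*(x/y) := by
      rcases Nat.eq_zero_or_pos j with h0 | h0
      · rw [h0, pow_zero]
        have h5 : (1:ℝ) ≤ x/y := (one_le_div hy0).mpr hyx
        linarith
      · have hmin : ¬ (x ≤ 2^(j-1) * y) := Nat.find_min hP (Nat.sub_lt h0 one_pos)
        push_neg at hmin
        have hje : (2:ℝ)^j = 2 * 2^(j-1) := by
          rw [← pow_succ']
          congr 1
          omega
        have h5 : (2:ℝ)^(j-1) ≤ x/y := (le_div_iff₀ hy0).mpr hmin.le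
        rw [hje]
        linarith
    calc T y ≤ (2^β)^j * T (2^j * y) := hiter j y hy
      _ ≤ (2^β)^j * T x :=
          mul_le_mul_of_nonneg_left (hTanti x _ hj) (by positivity)
      _ ≤ 2^β * (x/y)^β * T x := by
          apply mul_le_mul_of_nonneg_right _ (hTnonneg x)
          have e1 : ((2:ℝ)^β)^j = ((2:ℝ)^j)^β := by
            rw [← Real.rpow_natCast ((2:ℝ)^β) j, ← Real.rpow_mul h2.le,
              ← Real.rpow_natCast (2:ℝ) j, ← Real.rpow_mul h2.le, mul_comm]
          have e2 : (2:ℝ)^β * (x/y)^β = (2*(x/y))^β :=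
            (Real.mul_rpow (by norm_num) (by positivity)).symm
          rw [e1, e2]
          exact Real.rpow_le_rpow (by positivity) hjb hβ0.le
  -- n²/b² → 0
  have hbpos : ∀ᶠ n : ℕ in atTop, x₀ ≤ b n := hb.eventually (eventually_ge_atTop x₀)
  have hTb2 : ∀ᶠ n : ℕ in atTop, (n:ℝ)^2 * T (b n) ≤ 2 :=
    hn2T.eventually (eventually_le_nhds one_lt_two)
  have hTx₀pos : 0 < T x₀ := hTpos x₀ hx₀pos
  have hnb : Tendsto (fun n : ℕ => (n:ℝ)^2/(b n)^2) atTop (nhds 0) := by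
    set C₂ : ℝ := 2*2^β/(T x₀ * x₀^β) with hC₂def
    apply squeeze_zero' (g := fun n : ℕ => C₂ * (b n)^(β-2))
      (Eventually.of_forall fun n => by positivity)
    · filter_upwards [hbpos, hTb2] with n hbn hT2n
      have hb0 : 0 < b n := lt_of_lt_of_le hx₀pos hbn
      have hp := hPotter x₀ (b n) le_rfl hbn
      have h6 : (n:ℝ)^2 * T x₀ ≤ (2^β * (b n/x₀)^β) * 2 := by
        calc (n:ℝ)^2 * T x₀ ≤ (n:ℝ)^2 * (2^β * (b n/x₀)^β * T (b n)) :=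
              mul_le_mul_of_nonneg_left hp (sq_nonneg _)
          _ = (2^β * (b n/x₀)^β) * ((n:ℝ)^2 * T (b n)) := by ring
          _ ≤ (2^β * (b n/x₀)^β) * 2 :=
              mul_le_mul_of_nonneg_left hT2n (by positivity)
      have h8 : (n:ℝ)^2 ≤ C₂ * (b n)^β := by
        have h7 : (n:ℝ)^2 ≤ (2^β * (b n/x₀)^β) * 2 / T x₀ :=
          (le_div_iff₀ hTx₀pos).mpr h6
        have h9 : (b n/x₀)^β = (b n)^β / x₀^β := Real.div_rpow hb0.le hx₀pos.le β
        rw [h9] at h7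
        refine h7.trans (le_of_eq ?_)
        rw [hC₂def]
        have hx₀β : x₀^β ≠ 0 := ne_of_gt (Real.rpow_pos_of_pos hx₀pos _)
        field_simp
      have h10 : (b n)^(β-2) = (b n)^β / (b n)^2 := by
        rw [show ((b n)^2 : ℝ) = (b n)^((2:ℕ):ℝ) from (Real.rpow_natCast _ 2).symm,
          Real.rpow_sub hb0]
        norm_num
      calc (n:ℝ)^2/(b n)^2 ≤ (C₂ * (b n)^β)/(b n)^2 := by
            gcongr
        _ = C₂ * (b n)^(β-2) := by rw [h10]; ring
    · have h1 : Tendsto (fun n : ℕ => (b n)^(β-2)) atTop (nhds 0) := by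
        have h0 := (tendsto_rpow_neg_atTop (show (0:ℝ) < 2-β by linarith)).comp hb
        simpa [neg_sub, Function.comp_def] using h0
      have := h1.const_mul C₂
      simpa using this
  -- equal laws
  have hlaw : ∀ p : ℤ × ℤ, Measure.map (X p) μ = Measure.map (X (0,0)) μ := by
    intro p
    have h := hstat p.1 p.2
    have hfm : Measurable (fun ω => fun s : ℤ×ℤ => X (s.1 + p.1, s.2 + p.2) ω) :=
      measurable_pi_lambda _ fun s => hmeas _
    have hfm0 : Measurable (fun ω => fun s : ℤ×ℤ => X s ω) :=
      measurable_pi_lambda _ fun s => hmeas _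
    have heval : Measurable (fun f : (ℤ×ℤ) → ℝ => f (0,0)) := measurable_pi_apply _
    have h2' := congrArg (Measure.map (fun f : (ℤ×ℤ) → ℝ => f (0,0))) h
    rw [Measure.map_map heval hfm, Measure.map_map heval hfm0] at h2'
    simpa [Function.comp_def] using h2'
  -- constants
  set s₀ : ℝ := 2 * x₀ with hs₀def
  have hs₀pos : 0 < s₀ := by positivity
  set C₀ : ℝ := 2^(2*β+1) with hC₀def
  have hC₀pos : 0 < C₀ := Real.rpow_pos_of_pos h2 _
  set q : ℝ := (2:ℝ)^(β-2) with hqdef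
  have hq0 : 0 < q := Real.rpow_pos_of_pos h2 _
  have hq1 : q < 1 := Real.rpow_lt_one_of_one_lt_of_neg one_lt_two (by linarith)
  -- main per-ε bound
  have hDnn : ∀ x : ℝ, 0 ≤ x → 0 ≤ C₀ * x ^ (2-β) * (1-q)⁻¹ := by
    intro x hx
    have h1q : (0:ℝ) < 1 - q := by linarith
    exact mul_nonneg (mul_nonneg hC₀pos.le (Real.rpow_nonneg hx _)) (inv_nonneg.mpr h1q.le)
  have main : ∀ ε : ℝ, 0 < ε → ε ≤ 1 →
      Filter.limsup
        (fun n : ℕ => μ {ω | δ < specNorm (truncLe (wignerMat X (b n) n ω) ε)}) atTop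
      ≤ ENNReal.ofReal (C₀ * ε^(2-β) * (1-q)⁻¹ / δ^2) := by
    intro ε hε hε1
    have hεD : 0 ≤ C₀ * ε^(2-β) * (1-q)⁻¹ := hDnn ε hε.le
    have hbound : ∀ᶠ n : ℕ in atTop,
        μ {ω | δ < specNorm (truncLe (wignerMat X (b n) n ω) ε)}
          ≤ ENNReal.ofReal (((n:ℝ)^2/(b n)^2 * s₀^2 + C₀ * ε^(2-β) * (1-q)⁻¹) / δ^2) := by
      filter_upwards [hbpos, hTb2] with n hbn hT2n
      set c : ℝ := b n with hcdef
      have hc0 : 0 < c := lt_of_lt_of_le hx₀pos hbn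
      set N : Ω → Matrix (Fin n) (Fin n) ℝ := fun ω => truncLe (wignerMat X c n ω) ε
        with hNdef
      set S : Ω → ℝ := fun ω => ∑ i, ∑ j, (N ω i j)^2 with hSdef
      have hS0 : ∀ ω, 0 ≤ S ω := fun ω =>
        Finset.sum_nonneg fun i _ => Finset.sum_nonneg fun j _ => sq_nonneg _
      have hentry : ∀ (i j : Fin n) ω,
          N ω i j = if ε < |symX X ((i:ℕ)+1:ℤ) ((j:ℕ)+1:ℤ) ω / c| then 0
            else symX X ((i:ℕ)+1:ℤ) ((j:ℕ)+1:ℤ) ω / c := by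
        intro i j ω
        show (truncLe (wignerMat X c n ω) ε) i j = _
        have e1 : truncGt (wignerMat X c n ω) ε i j
            = if ε < |wignerMat X c n ω i j| then wignerMat X c n ω i j else 0 := rfl
        have e2 : wignerMat X c n ω i j = symX X ((i:ℕ)+1:ℤ) ((j:ℕ)+1:ℤ) ω / c := rfl
        rw [truncLe, Matrix.sub_apply, e1, e2]
        split_ifs <;> simp
      have hwmeas : ∀ (i j : Fin n), Measurable
          (fun ω => symX X ((i:ℕ)+1:ℤ) ((j:ℕ)+1:ℤ) ω / c) :=
        fun i j => (measurable_symX' X hmeas _ _).div_const c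
      have hNmeas : ∀ (i j : Fin n), Measurable (fun ω => N ω i j) := by
        intro i j
        rw [show (fun ω => N ω i j) = fun ω =>
          (if ε < |symX X ((i:ℕ)+1:ℤ) ((j:ℕ)+1:ℤ) ω / c| then 0
            else symX X ((i:ℕ)+1:ℤ) ((j:ℕ)+1:ℤ) ω / c) from funext fun ω => hentry i j ω]
        exact Measurable.ite (measurableSet_lt measurable_const (hwmeas i j).abs)
          measurable_const (hwmeas i j)
      have hSmeas : Measurable S :=
        Finset.measurable_sum _ fun i _ => Finset.measurable_sum _ fun j _ =>
          ((hNmeas i j).pow_const 2)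
      have hincl : {ω | δ < specNorm (N ω)}
          ⊆ {ω | ENNReal.ofReal (δ^2) ≤ ENNReal.ofReal (S ω)} := by
        intro ω hω
        have h1' : δ < Real.sqrt (S ω) := lt_of_lt_of_le hω (specNorm_le_sqrt' (N ω))
        have h3' := Real.sq_sqrt (hS0 ω)
        have h2' : δ^2 ≤ S ω := by nlinarith [Real.sqrt_nonneg (S ω)]
        exact ENNReal.ofReal_le_ofReal h2'
      have hδ2 : ENNReal.ofReal (δ^2) ≠ 0 := ne_of_gt (ENNReal.ofReal_pos.mpr (by positivity))
      have hcheb : μ {ω | ENNReal.ofReal (δ^2) ≤ ENNReal.ofReal (S ω)}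
          ≤ (∫⁻ ω, ENNReal.ofReal (S ω) ∂μ) / ENNReal.ofReal (δ^2) :=
        meas_ge_le_lintegral_div (ENNReal.measurable_ofReal.comp hSmeas).aemeasurable
          hδ2 ENNReal.ofReal_ne_top
      set g : ℝ → ENNReal := fun y =>
        if ε < |y / c| then 0 else ENNReal.ofReal ((y/c)^2) with hgdef
      have hgmeas : Measurable g := by
        apply Measurable.ite
        · exact measurableSet_lt measurable_const (measurable_id.div_const c).abs
        · exact measurable_const
        · exact ENNReal.measurable_ofReal.comp ((measurable_id.div_const c).pow_const 2)
      have hgX : ∀ (i j : Fin n), ∃ p : ℤ × ℤ,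
          (fun ω => ENNReal.ofReal ((N ω i j)^2)) = fun ω => g (X p ω) := by
        intro i j
        by_cases hij : ((i:ℕ)+1 : ℤ) ≤ ((j:ℕ)+1 : ℤ)
        · refine ⟨(((i:ℕ)+1 : ℤ), ((j:ℕ)+1 : ℤ)), funext fun ω => ?_⟩
          rw [hentry i j ω]
          simp only [hgdef, symX, if_pos hij]
          split_ifs with h' <;> simp
        · refine ⟨(((j:ℕ)+1 : ℤ), ((i:ℕ)+1 : ℤ)), funext fun ω => ?_⟩
          rw [hentry i j ω]
          simp only [hgdef, symX, if_neg hij]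
          split_ifs with h' <;> simp
      set J : ENNReal := ∫⁻ ω, g (X (0,0) ω) ∂μ with hJdef
      have hJp : ∀ p : ℤ × ℤ, ∫⁻ ω, g (X p ω) ∂μ = J := by
        intro p
        rw [← lintegral_map hgmeas (hmeas p), hlaw p,
          lintegral_map hgmeas (hmeas (0,0))]
      have h9' : (n:ENNReal)^2 = ENNReal.ofReal ((n:ℝ)^2) := by
        rw [ENNReal.ofReal_pow (Nat.cast_nonneg n), ENNReal.ofReal_natCast]
      have hSint : ∫⁻ ω, ENNReal.ofReal (S ω) ∂μ ≤ ((n:ENNReal))^2 * J := by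
        refine le_of_eq ?_
        have h1' : ∀ ω, ENNReal.ofReal (S ω) = ∑ i, ∑ j, ENNReal.ofReal ((N ω i j)^2) := by
          intro ω
          rw [hSdef]
          dsimp only
          rw [ENNReal.ofReal_sum_of_nonneg (f := fun i => ∑ j, (N ω i j)^2)
            (fun i _ => Finset.sum_nonneg fun j _ => sq_nonneg _)]
          exact Finset.sum_congr rfl fun i _ =>
            ENNReal.ofReal_sum_of_nonneg fun j _ => sq_nonneg _
        calc ∫⁻ ω, ENNReal.ofReal (S ω) ∂μ
            = ∑ i, ∑ j, ∫⁻ ω, ENNReal.ofReal ((N ω i j)^2) ∂μ := by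
              simp_rw [h1']
              rw [lintegral_finset_sum Finset.univ
                (f := fun (i : Fin n) (ω : Ω) => ∑ j, ENNReal.ofReal ((N ω i j)^2))
                (fun i _ => Finset.measurable_sum _ fun j _ =>
                  ENNReal.measurable_ofReal.comp ((hNmeas i j).pow_const 2))]
              exact Finset.sum_congr rfl fun i _ =>
                lintegral_finset_sum Finset.univ
                  (f := fun (j : Fin n) (ω : Ω) => ENNReal.ofReal ((N ω i j)^2))
                  (fun j _ => ENNReal.measurable_ofReal.comp ((hNmeas i j).pow_const 2))
          _ = ∑ _i : Fin n, ∑ _j : Fin n, J := by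
              refine Finset.sum_congr rfl fun i _ => Finset.sum_congr rfl fun j _ => ?_
              obtain ⟨p, hp⟩ := hgX i j
              rw [hp, hJp p]
          _ = ((n:ENNReal))^2 * J := by
              simp only [Finset.sum_const, Finset.card_univ, Fintype.card_fin, nsmul_eq_mul]
              ring
      -- dyadic levels
      set l : ℕ → ℝ := fun k => ε * c / 2^k with hldef
      have hlpos : ∀ k, (0:ℝ) < l k := fun k => by positivity
      have hlanti : ∀ k m : ℕ, k ≤ m → l m ≤ l k := by
        intro k m hkm
        exact div_le_div_of_nonneg_left (by positivity) (by positivity)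
          (pow_le_pow_right₀ one_le_two hkm)
      have hKex : ∃ k : ℕ, l k ≤ s₀ := by
        obtain ⟨k, hk⟩ := pow_unbounded_of_one_lt (ε*c/s₀) one_lt_two
        refine ⟨k, ?_⟩
        show ε * c / 2^k ≤ s₀
        rw [div_le_iff₀ (pow_pos h2 k)]
        rw [div_lt_iff₀ hs₀pos] at hk
        nlinarith
      obtain ⟨K, hKspec, hKmin⟩ : ∃ K : ℕ, l K ≤ s₀ ∧ ∀ k, k < K → s₀ < l k :=
        ⟨Nat.find hKex, Nat.find_spec hKex, fun k hk => not_le.mp (Nat.find_min hKex hk)⟩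
      have hgle : ∀ y : ℝ, g y ≤ ENNReal.ofReal (s₀^2/c^2)
          + ∑ k ∈ Finset.range K, ENNReal.ofReal ((ε/2^k)^2)
              * Set.indicator {z : ℝ | l (k+1) < |z|} (fun _ => (1:ENNReal)) y := by
        intro y
        rw [hgdef]
        dsimp only
        split_ifs with hcase
        · exact zero_le
        · push_neg at hcase
          have habs : |y| ≤ ε * c := by
            rw [abs_div, abs_of_pos hc0, div_le_iff₀ hc0] at hcase
            exact hcase
          by_cases hy : |y| ≤ s₀
          · refine le_trans ?_ le_self_add
            apply ENNReal.ofReal_le_ofReal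
            rw [div_pow]
            have h5 : y^2 ≤ s₀^2 := by nlinarith [sq_abs y, abs_nonneg y]
            gcongr
          · push_neg at hy
            have hy0 : 0 < |y| := lt_trans hs₀pos hy
            have hex2 : ∃ k : ℕ, l (k+1) < |y| := by
              obtain ⟨k, hk⟩ := pow_unbounded_of_one_lt (ε*c/|y|) one_lt_two
              refine ⟨k, ?_⟩
              show ε * c / 2^(k+1) < |y|
              rw [div_lt_iff₀ (pow_pos h2 (k+1))]
              rw [div_lt_iff₀ hy0] at hk
              have h6 : (2:ℝ)^k ≤ 2^(k+1) := pow_le_pow_right₀ one_le_two (Nat.le_succ k)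
              nlinarith
            obtain ⟨k, hk1, hkmin⟩ : ∃ k : ℕ, l (k+1) < |y| ∧ ∀ m, m < k → ¬ l (m+1) < |y| :=
              ⟨Nat.find hex2, Nat.find_spec hex2, fun m hm => Nat.find_min hex2 hm⟩
            have hk2 : |y| ≤ l k := by
              rcases Nat.eq_zero_or_pos k with h0 | h0
              · rw [h0]
                show |y| ≤ ε * c / 2^0
                simpa using habs
              · have hm : ¬ l ((k-1)+1) < |y| := hkmin (k-1) (by omega)
                push_neg at hm
                have he : (k-1)+1 = k := by omega
                rwa [he] at hm
            have hkK : k < K := by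
              by_contra hcon
              push_neg at hcon
              exact absurd (le_trans hk2 (le_trans (hlanti K k hcon) hKspec))
                (not_le.mpr hy)
            have hterm : ENNReal.ofReal ((y/c)^2)
                ≤ ENNReal.ofReal ((ε/2^k)^2)
                    * Set.indicator {z : ℝ | l (k+1) < |z|} (fun _ => (1:ENNReal)) y := by
              rw [Set.indicator_of_mem (show y ∈ {z : ℝ | l (k+1) < |z|} from hk1), mul_one]
              apply ENNReal.ofReal_le_ofReal
              have hyc : |y|/c ≤ ε/2^k := by
                rw [div_le_div_iff₀ hc0 (pow_pos h2 k)]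
                have h6 : |y| * 2^k ≤ ε * c := (le_div_iff₀ (pow_pos h2 k)).mp hk2
                linarith
              calc (y/c)^2 = (|y|/c)^2 := by rw [div_pow, div_pow, sq_abs]
                _ ≤ (ε/2^k)^2 := pow_le_pow_left₀ (by positivity) hyc 2
            refine le_trans hterm (le_trans ?_ le_add_self)
            exact Finset.single_le_sum (f := fun k => ENNReal.ofReal ((ε/2^k)^2)
                * Set.indicator {z : ℝ | l (k+1) < |z|} (fun _ => (1:ENNReal)) y)
              (fun k _ => zero_le) (Finset.mem_range.mpr hkK)
      have hind : ∀ (k : ℕ) (ω : Ω), Set.indicator {z : ℝ | l (k+1) < |z|}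
          (fun _ => (1:ENNReal)) (X (0,0) ω)
          = Set.indicator {ω | l (k+1) < |X (0,0) ω|} (fun _ => (1:ENNReal)) ω := by
        intro k ω
        by_cases hh : l (k+1) < |X (0,0) ω|
        · rw [Set.indicator_of_mem (show X (0,0) ω ∈ {z : ℝ | l (k+1) < |z|} from hh),
            Set.indicator_of_mem (show ω ∈ {ω | l (k+1) < |X (0,0) ω|} from hh)]
        · rw [Set.indicator_of_notMem (show X (0,0) ω ∉ {z : ℝ | l (k+1) < |z|} from hh),
            Set.indicator_of_notMem (show ω ∉ {ω | l (k+1) < |X (0,0) ω|} from hh)]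
      have hsetmeas : ∀ k : ℕ, MeasurableSet {ω | l (k+1) < |X (0,0) ω|} :=
        fun k => measurableSet_lt measurable_const (hmeas (0,0)).abs
      have hJle : J ≤ ENNReal.ofReal (s₀^2/c^2)
          + ∑ k ∈ Finset.range K, ENNReal.ofReal ((ε/2^k)^2)
              * μ {ω | l (k+1) < |X (0,0) ω|} := by
        refine le_trans (lintegral_mono fun ω => hgle (X (0,0) ω)) (le_of_eq ?_)
        rw [lintegral_add_left measurable_const, lintegral_const]
        simp only [measure_univ, mul_one]
        congr 1
        rw [lintegral_finset_sum]
        · refine Finset.sum_congr rfl fun k _ => ?_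
          simp only [hind k]
          rw [lintegral_const_mul _ (Measurable.indicator measurable_const (hsetmeas k)),
            lintegral_indicator (hsetmeas k)]
          simp
        · intro k _
          simp only [hind k]
          exact (Measurable.indicator measurable_const (hsetmeas k)).const_mul _
      have hterm2 : ∀ k ∈ Finset.range K,
          ENNReal.ofReal ((ε/2^k)^2) * ((n:ENNReal)^2 * μ {ω | l (k+1) < |X (0,0) ω|})
            ≤ ENNReal.ofReal (C₀ * ε^(2-β) * q^k) := by
        intro k hk
        have hkK := Finset.mem_range.mp hk
        have hμk : μ {ω | l (k+1) < |X (0,0) ω|} = ENNReal.ofReal (T (l (k+1))) :=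
          (ENNReal.ofReal_toReal (measure_ne_top μ _)).symm
        have hlx₀ : x₀ ≤ l (k+1) := by
          have h5 := hKmin k hkK
          have h6 : l (k+1) = l k / 2 := by
            show ε * c / 2^(k+1) = (ε * c / 2^k)/2
            rw [pow_succ]; ring
          rw [h6]; rw [hs₀def] at h5; linarith
        have hlc : l (k+1) ≤ c := by
          show ε * c / 2^(k+1) ≤ c
          rw [div_le_iff₀ (pow_pos h2 (k+1))]
          have h7 : (2:ℝ) ≤ 2^(k+1) := by
            calc (2:ℝ) = 2^1 := (pow_one 2).symm
              _ ≤ 2^(k+1) := pow_le_pow_right₀ one_le_two (by omega)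
          nlinarith [mul_le_mul_of_nonneg_right hε1 hc0.le,
            mul_le_mul_of_nonneg_left h7 hc0.le, hc0.le]
        have hp := hPotter (l (k+1)) c hlx₀ hlc
        have hquot : c / l (k+1) = 2^(k+1)/ε := by
          show c / (ε * c / 2^(k+1)) = 2^(k+1)/ε
          field_simp
        rw [hquot] at hp
        have h8 : (n:ℝ)^2 * T (l (k+1)) ≤ 2^β * (((2:ℝ)^(k+1))/ε)^β * 2 := by
          calc (n:ℝ)^2 * T (l (k+1))
              ≤ (n:ℝ)^2 * (2^β * (((2:ℝ)^(k+1))/ε)^β * T c) :=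
                mul_le_mul_of_nonneg_left hp (sq_nonneg _)
            _ = (2^β * (((2:ℝ)^(k+1))/ε)^β) * ((n:ℝ)^2 * T c) := by ring
            _ ≤ (2^β * (((2:ℝ)^(k+1))/ε)^β) * 2 :=
                mul_le_mul_of_nonneg_left hT2n (by positivity)
            _ = 2^β * (((2:ℝ)^(k+1))/ε)^β * 2 := by ring
        rw [hμk, h9', ← ENNReal.ofReal_mul (by positivity),
          ← ENNReal.ofReal_mul (by positivity)]
        apply ENNReal.ofReal_le_ofReal
        calc (ε/2^k)^2 * ((n:ℝ)^2 * T (l (k+1)))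
            ≤ (ε/2^k)^2 * (2^β * (((2:ℝ)^(k+1))/ε)^β * 2) :=
              mul_le_mul_of_nonneg_left h8 (by positivity)
          _ = C₀ * ε^(2-β) * q^k := by rw [hC₀def, hqdef]; exact pow_calc' hε k
      have hgeom : ∑ k ∈ Finset.range K, q^k ≤ (1-q)⁻¹ := by
        have hsum := Summable.sum_le_tsum (Finset.range K) (fun k _ => pow_nonneg hq0.le k)
          (summable_geometric_of_lt_one hq0.le hq1)
        rwa [tsum_geometric_of_lt_one hq0.le hq1] at hsum
      have hfinal : (n:ENNReal)^2 * J
          ≤ ENNReal.ofReal ((n:ℝ)^2/c^2 * s₀^2) + ENNReal.ofReal (C₀ * ε^(2-β) * (1-q)⁻¹) := by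
        calc (n:ENNReal)^2 * J
            ≤ (n:ENNReal)^2 * (ENNReal.ofReal (s₀^2/c^2)
              + ∑ k ∈ Finset.range K, ENNReal.ofReal ((ε/2^k)^2)
                  * μ {ω | l (k+1) < |X (0,0) ω|}) := mul_le_mul_right hJle _
          _ = ENNReal.ofReal ((n:ℝ)^2) * ENNReal.ofReal (s₀^2/c^2)
              + ∑ k ∈ Finset.range K, ENNReal.ofReal ((ε/2^k)^2)
                  * ((n:ENNReal)^2 * μ {ω | l (k+1) < |X (0,0) ω|}) := by
              rw [mul_add, Finset.mul_sum, ← h9']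
              congr 1
              exact Finset.sum_congr rfl fun k _ => by ring
          _ ≤ ENNReal.ofReal ((n:ℝ)^2/c^2 * s₀^2)
                + ENNReal.ofReal (C₀ * ε^(2-β) * (1-q)⁻¹) := by
              apply add_le_add
              · rw [← ENNReal.ofReal_mul (by positivity)]
                exact ENNReal.ofReal_le_ofReal (le_of_eq (by ring))
              · calc ∑ k ∈ Finset.range K, ENNReal.ofReal ((ε/2^k)^2)
                      * ((n:ENNReal)^2 * μ {ω | l (k+1) < |X (0,0) ω|})
                    ≤ ∑ k ∈ Finset.range K, ENNReal.ofReal (C₀ * ε^(2-β) * q^k) :=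
                      Finset.sum_le_sum hterm2
                  _ = ENNReal.ofReal (∑ k ∈ Finset.range K, C₀ * ε^(2-β) * q^k) :=
                      (ENNReal.ofReal_sum_of_nonneg fun k _ => by positivity).symm
                  _ ≤ ENNReal.ofReal (C₀ * ε^(2-β) * (1-q)⁻¹) := by
                      apply ENNReal.ofReal_le_ofReal
                      rw [← Finset.mul_sum]
                      exact mul_le_mul_of_nonneg_left hgeom (by positivity)
      calc μ {ω | δ < specNorm (truncLe (wignerMat X c n ω) ε)}
          ≤ μ {ω | ENNReal.ofReal (δ^2) ≤ ENNReal.ofReal (S ω)} := measure_mono hincl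
        _ ≤ (∫⁻ ω, ENNReal.ofReal (S ω) ∂μ) / ENNReal.ofReal (δ^2) := hcheb
        _ ≤ ((n:ENNReal)^2 * J) / ENNReal.ofReal (δ^2) := ENNReal.div_le_div_right hSint _
        _ ≤ (ENNReal.ofReal ((n:ℝ)^2/c^2 * s₀^2)
              + ENNReal.ofReal (C₀ * ε^(2-β) * (1-q)⁻¹)) / ENNReal.ofReal (δ^2) :=
            ENNReal.div_le_div_right hfinal _
        _ = ENNReal.ofReal (((n:ℝ)^2/c^2 * s₀^2 + C₀ * ε^(2-β) * (1-q)⁻¹) / δ^2) := by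
            rw [← ENNReal.ofReal_add (by positivity) hεD,
              ENNReal.ofReal_div_of_pos (by positivity)]
    have hlim : Tendsto (fun n : ℕ =>
        ENNReal.ofReal (((n:ℝ)^2/(b n)^2 * s₀^2 + C₀ * ε^(2-β) * (1-q)⁻¹) / δ^2)) atTop
        (nhds (ENNReal.ofReal (C₀ * ε^(2-β) * (1-q)⁻¹ / δ^2))) := by
      apply Tendsto.comp (ENNReal.continuous_ofReal.tendsto _)
      have h5 : Tendsto (fun n : ℕ => (n:ℝ)^2/(b n)^2 * s₀^2) atTop (nhds 0) := by
        simpa using hnb.mul_const (s₀^2)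
      have h6 := (h5.add_const (C₀ * ε^(2-β) * (1-q)⁻¹)).div_const (δ^2)
      simpa using h6
    exact le_trans (Filter.limsup_le_limsup hbound) (le_of_eq hlim.limsup_eq)
  -- squeeze as ε → 0⁺
  have hupper : Tendsto (fun ε : ℝ => ENNReal.ofReal (C₀ * ε^(2-β) * (1-q)⁻¹ / δ^2))
      (nhdsWithin 0 (Set.Ioi 0)) (nhds 0) := by
    have h1 : Tendsto (fun ε : ℝ => ε^(2-β)) (nhds 0) (nhds 0) := by
      have hc : ContinuousAt (fun ε : ℝ => ε^(2-β)) 0 :=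
        Real.continuousAt_rpow_const 0 (2-β) (Or.inr (by linarith))
      have h0 : (0:ℝ)^(2-β) = 0 := Real.zero_rpow (by linarith)
      simpa [ContinuousAt, h0] using hc
    have h2' : Tendsto (fun ε : ℝ => C₀ * ε^(2-β) * (1-q)⁻¹ / δ^2) (nhds 0) (nhds 0) := by
      have h3 := ((h1.const_mul C₀).mul_const (1-q)⁻¹).div_const (δ^2)
      simpa using h3
    have h4 := (ENNReal.continuous_ofReal.tendsto 0).comp (h2'.mono_left (nhdsWithin_le_nhds (s := Set.Ioi (0:ℝ))))
    simpa [Function.comp_def] using h4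
  apply tendsto_of_tendsto_of_tendsto_of_le_of_le' tendsto_const_nhds hupper
  · exact Eventually.of_forall fun ε => zero_le
  · filter_upwards [eventually_mem_nhdsWithin,
      Filter.Eventually.filter_mono nhdsWithin_le_nhds
        (eventually_le_nhds (by norm_num : (0:ℝ) < 1))] with ε hε hε1
    exact main ε hε hε1
end
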